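/- Let A be any model of SAPP. Then there exists a map f : A → A that is surjective, not injective, and satisfies: for all x, y ∈ A, O(x,y) holds if and only if O(f(x), f(y)) holds. (This is the key step showing that equality is not definable in terms of O alone in any model of SAPP.) -/

import Mathlib

open FirstOrder Language Structure BoundedFormula

/-- The relation symbols of the language `L`: a single binary relation `O`. -/
inductive PerpRel : ℕ → Type
  | o : PerpRel 2

/-- The first-order language with a single binary relation symbol `O`. -/
def L : Language := ⟨fun _ => Empty, PerpRel⟩
  deriving IsRelational

/-- The binary relation symbol `O` of `L`. -/
abbrev oSym : L.Relations 2 := .o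

/-- `O(xᵢ, xⱼ)` as a bounded formula. -/
def oBF {n : ℕ} (i j : Fin n) : L.BoundedFormula Empty n :=
  oSym.boundedFormula₂ (&i) (&j)

/-- Finite conjunction of a list of bounded formulas. -/
def andAll {n : ℕ} : List (L.BoundedFormula Empty n) → L.BoundedFormula Empty n
  | [] => ⊤
  | φ :: l => φ ⊓ andAll l

/-- λ₁ₙ : ∀y₁…∀yₙ∀s(O(s,y₁) ∧ … ∧ O(s,yₙ) → ∃t(t ≠ y₁ ∧ … ∧ t ≠ yₙ ∧ O(s,t))).
Variables: y₁,…,yₙ are de Bruijn indices 0,…,n-1, s is index n, t is index n+1. -/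
def lam1 (n : ℕ) : L.Sentence :=
  ((andAll ((List.finRange n).map fun i => oBF (Fin.last n) i.castSucc)).imp
    ((andAll ((List.finRange n).map fun i =>
        ∼((&(Fin.last (n + 1))) =' (&(i.castSucc.castSucc)))) ⊓
      oBF ((Fin.last n).castSucc) (Fin.last (n + 1))).ex)).alls

/-- λ₂ₙ : ∀y₁…∀yₙ∃s(¬O(s,y₁) ∧ … ∧ ¬O(s,yₙ)).
Variables: y₁,…,yₙ are de Bruijn indices 0,…,n-1, s is index n. -/
def lam2 (n : ℕ) : L.Sentence :=
  ((andAll ((List.finRange n).map fun i => ∼(oBF (Fin.last n) i.castSucc))).ex).alls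

/-- λ₃ : ∀x ¬O(x,x). -/
def lam3 : L.Sentence := (∼(oBF (0 : Fin 1) 0)).alls

/-- λ₄ : ∀x∀y(O(x,y) → O(y,x)). -/
def lam4 : L.Sentence := ((oBF (0 : Fin 2) 1).imp (oBF (1 : Fin 2) 0)).alls

/-- λ₅ : ∀x∃y O(x,y). -/
def lam5 : L.Sentence := ((oBF (0 : Fin 2) 1).ex).alls

/-- λ₆ : ∀x∀y∀z∀t(O(x,z) ∧ O(y,z) ∧ O(x,t) → O(y,t)). -/
def lam6 : L.Sentence :=
  ((oBF (0 : Fin 4) 2 ⊓ oBF (1 : Fin 4) 2 ⊓ oBF (0 : Fin 4) 3).imp (oBF (1 : Fin 4) 3)).alls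

/-- The theory SAPP. -/
def SAPP : L.Theory :=
  {φ | ∃ n, 1 ≤ n ∧ φ = lam1 n} ∪ {φ | ∃ n, 2 ≤ n ∧ φ = lam2 n} ∪ {lam3, lam4, lam5, lam6}

section Aux

lemma realize_andAll {M : Type*} [L.Structure M] {n : ℕ} (l : List (L.BoundedFormula Empty n))
    (v : Empty → M) (xs : Fin n → M) :
    (andAll l).Realize v xs ↔ ∀ φ ∈ l, φ.Realize v xs := by
  induction l with
  | nil => simp [andAll]
  | cons φ l ih => simp [andAll, ih]

end Aux

theorem statement_6' (M : Type*) [L.Structure M] [Nonempty M] (h : M ⊨ SAPP) :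
    ∃ f : M → M, Function.Surjective f ∧ ¬ Function.Injective f ∧
      ∀ x y : M, RelMap oSym ![x, y] ↔ RelMap oSym ![f x, f y] := by
  haveI := h
  classical
  have hsym : ∀ x y : M, RelMap oSym ![x, y] → RelMap oSym ![y, x] := by
    have hr := Theory.realize_sentence_of_mem (T := SAPP) (M := M)
      (show lam4 ∈ SAPP by right; simp)
    rw [lam4] at hr
    simp only [Sentence.Realize, Formula.Realize, BoundedFormula.alls, realize_all,
      realize_imp, oBF, realize_rel₂, Term.realize_var] at hr
    intro x y hxy
    exact hr x y hxy
  have h6 : ∀ x y z t : M, RelMap oSym ![x, z] → RelMap oSym ![y, z] → RelMap oSym ![x, t] →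
      RelMap oSym ![y, t] := by
    have hr := Theory.realize_sentence_of_mem (T := SAPP) (M := M)
      (show lam6 ∈ SAPP by right; simp)
    rw [lam6] at hr
    simp only [Sentence.Realize, Formula.Realize, BoundedFormula.alls, realize_all,
      realize_imp, realize_inf, oBF, realize_rel₂, Term.realize_var] at hr
    intro x y z t h1 h2 h3
    exact hr x y z t ⟨⟨h1, h2⟩, h3⟩
  have h5 : ∀ x : M, ∃ y, RelMap oSym ![x, y] := by
    have hr := Theory.realize_sentence_of_mem (T := SAPP) (M := M)
      (show lam5 ∈ SAPP by right; simp)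
    rw [lam5] at hr
    simp only [Sentence.Realize, Formula.Realize, BoundedFormula.alls, realize_all,
      realize_ex, oBF, realize_rel₂, Term.realize_var] at hr
    intro x
    obtain ⟨y, hy⟩ := hr x
    exact ⟨y, hy⟩
  have h1 : ∀ n : ℕ, 1 ≤ n → ∀ (y : Fin n → M) (s : M), (∀ i, RelMap oSym ![s, y i]) →
      ∃ t, (∀ i, t ≠ y i) ∧ RelMap oSym ![s, t] := by
    intro n hn y s hy
    have hr := Theory.realize_sentence_of_mem (T := SAPP) (M := M)
      (show lam1 n ∈ SAPP from Or.inl (Or.inl ⟨n, hn, rfl⟩))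
    rw [lam1] at hr
    simp only [Sentence.Realize, realize_alls, realize_imp, realize_ex,
      realize_inf, realize_not, realize_bdEqual, realize_andAll, List.mem_map,
      List.mem_finRange, forall_exists_index, forall_apply_eq_imp_iff, true_and,
      oBF, realize_rel₂, Term.realize_var] at hr
    have hr2 := hr (Fin.snoc y s)
    simp only [Function.comp, Sum.elim_inr, Term.realize_var, Fin.snoc_last,
      Fin.snoc_castSucc] at hr2
    obtain ⟨t, ht⟩ := hr2 (fun i => hy i)
    exact ⟨t, fun i => ht.1 i, ht.2⟩
  obtain ⟨a⟩ := ‹Nonempty M›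
  obtain ⟨s, has⟩ := h5 a
  have hsa : RelMap oSym ![s, a] := hsym _ _ has
  have hinf : {x : M | RelMap oSym ![s, x]}.Infinite := by
    intro hfin
    set l := hfin.toFinset.toList with hl
    have hmem : ∀ x : M, RelMap oSym ![s, x] → x ∈ l := by
      intro x hx
      rw [hl, Finset.mem_toList, Set.Finite.mem_toFinset]
      exact hx
    have hmem' : ∀ x ∈ l, RelMap oSym ![s, x] := by
      intro x hx
      rw [hl, Finset.mem_toList, Set.Finite.mem_toFinset] at hx
      exact hx
    have hlen : 1 ≤ l.length :=
      List.length_pos_iff.mpr (List.ne_nil_of_mem (hmem a hsa))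
    obtain ⟨t, htne, hts⟩ := h1 l.length hlen (fun i => l.get i) s
      (fun i => hmem' _ (l.get_mem i))
    obtain ⟨i, hi⟩ := List.get_of_mem (hmem t hts)
    exact htne i hi.symm
  let emb := Set.Infinite.natEmbedding {x : M | RelMap oSym ![s, x]} hinf
  let e : ℕ → M := fun n => (emb n).1
  have einj : Function.Injective e := fun m n hmn =>
    emb.injective (Subtype.ext hmn)
  have eO : ∀ n, RelMap oSym ![s, e n] := fun n => (emb n).2
  let f : M → M := fun x => if hx : ∃ n, e n = x then e (hx.choose - 1) else x
  have key : ∀ n, f (e n) = e (n - 1) := by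
    intro n
    have hx : ∃ m, e m = e n := ⟨n, rfl⟩
    have : hx.choose = n := einj hx.choose_spec
    simp only [f, dif_pos hx, this]
  have hne : ∀ x, (¬ ∃ n, e n = x) → f x = x := fun x hx => dif_neg hx
  have hEq : ∀ u v w : M, RelMap oSym ![s, u] → RelMap oSym ![s, v] →
      (RelMap oSym ![u, w] ↔ RelMap oSym ![v, w]) := by
    intro u v w hu hv
    exact ⟨fun hw => h6 u v s w (hsym _ _ hu) (hsym _ _ hv) hw,
      fun hw => h6 v u s w (hsym _ _ hv) (hsym _ _ hu) hw⟩
  have hfx : ∀ x y : M, RelMap oSym ![x, y] ↔ RelMap oSym ![f x, y] := by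
    intro x y
    by_cases hx : ∃ n, e n = x
    · obtain ⟨n, rfl⟩ := hx
      rw [key]
      exact hEq _ _ _ (eO n) (eO (n - 1))
    · rw [hne x hx]
  have hsymiff : ∀ u v : M, RelMap oSym ![u, v] ↔ RelMap oSym ![v, u] :=
    fun u v => ⟨hsym u v, hsym v u⟩
  refine ⟨f, ?_, ?_, ?_⟩
  · intro m
    by_cases hm : ∃ n, e n = m
    · obtain ⟨n, rfl⟩ := hm
      exact ⟨e (n + 1), by rw [key]; simp⟩
    · exact ⟨m, hne m hm⟩
  · intro hinj
    have h01 : e 0 = e 1 := by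
      apply hinj
      rw [key, key]
    exact absurd (einj h01) (by norm_num)
  · intro x y
    calc RelMap oSym ![x, y] ↔ RelMap oSym ![f x, y] := hfx x y
      _ ↔ RelMap oSym ![y, f x] := hsymiff _ _
      _ ↔ RelMap oSym ![f y, f x] := hfx y (f x)
      _ ↔ RelMap oSym ![f x, f y] := hsymiff _ _


/-- any model of SAPP has a surjective, non-injective self-map preserving and
reflecting O. -/
theorem statement_6 (M : Type*) [L.Structure M] [Nonempty M] (h : M ⊨ SAPP) :
    ∃ f : M → M, Function.Surjective f ∧ ¬ Function.Injective f ∧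
      ∀ x y : M, RelMap oSym ![x, y] ↔ RelMap oSym ![f x, f y] := by
  exact statement_6' M h
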